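/- arXiv:1203.4980 — 2 statements merged into one kernel-verified Lean document; each statement's English description precedes it below -/
import Mathlib

section
/- Convolution with a nonnegative function supported (effectively) on one side preserves an asymmetry inequality: let R : ℝ → ℝ be integrable with R(y) = 0 for y ≤ β and R(y) ≥ 0 for y > β, and let φ : ℝ → ℝ be a nonnegative even integrable function that is nonincreasing on [0, ∞). Then for all Δ ≥ 0, (R * φ)(β + Δ) ≥ (R * φ)(β - Δ), where (R * φ)(x) = ∫ R(y) φ(x - y) dy. -/
open MeasureTheory

theorem conv_remainder_ineq (R φ : ℝ → ℝ) (β : ℝ)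
    (hRi : Integrable R) (hφi : Integrable φ)
    (hR0 : ∀ y, y ≤ β → R y = 0)
    (hRpos : ∀ y, β < y → 0 ≤ R y)
    (hφpos : ∀ x, 0 ≤ φ x)
    (hφeven : ∀ x, φ (-x) = φ x)
    (hφmono : AntitoneOn φ (Set.Ici (0 : ℝ))) :
    ∀ Δ : ℝ, 0 ≤ Δ →
      (∫ y, R y * φ (β - Δ - y)) ≤ ∫ y, R y * φ (β + Δ - y) := by
  intro Δ hΔ
  -- φ is bounded by φ 0
  have hbd : ∀ x, φ x ≤ φ 0 := by
    intro x
    rcases le_or_gt 0 x with h | h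
    · exact hφmono (Set.mem_Ici.2 le_rfl) (Set.mem_Ici.2 h) h
    · rw [← hφeven]
      exact hφmono (Set.mem_Ici.2 le_rfl) (Set.mem_Ici.2 (by linarith)) (by linarith)
  -- integrability of y ↦ R y * φ (c - y) for any c
  have hint : ∀ c : ℝ, Integrable (fun y => R y * φ (c - y)) := by
    intro c
    have hmp : MeasurePreserving (fun y : ℝ => c - y) volume volume :=
      (Measure.measurePreserving_sub_left volume c)
    have hmeas : AEStronglyMeasurable (fun y => φ (c - y)) volume :=
      hφi.aestronglyMeasurable.comp_measurePreserving hmp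
    have : Integrable (fun y => φ (c - y) * R y) volume := by
      apply hRi.bdd_mul (c := φ 0) hmeas
      exact Filter.Eventually.of_forall fun y => by
        rw [Real.norm_eq_abs, abs_of_nonneg (hφpos _)]; exact hbd _
    exact this.congr (Filter.Eventually.of_forall fun y => mul_comm _ _)
  apply integral_mono (hint (β - Δ)) (hint (β + Δ))
  intro y
  rcases le_or_gt y β with h | h
  · simp [hR0 y h]
  · apply mul_le_mul_of_nonneg_left _ (hRpos y h)
    set t := y - β with ht
    have ht0 : 0 < t := by simp [ht]; linarith
    have h1 : β - Δ - y = -(Δ + t) := by ring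
    have h2 : β + Δ - y = -(t - Δ) := by ring
    rw [h1, h2, hφeven, hφeven]
    rcases le_or_gt Δ t with h3 | h3
    · exact hφmono (Set.mem_Ici.2 (by linarith)) (Set.mem_Ici.2 (by linarith)) (by linarith)
    · rw [show t - Δ = -(Δ - t) by ring, hφeven]
      exact hφmono (Set.mem_Ici.2 (by linarith)) (Set.mem_Ici.2 (by linarith)) (by linarith)
end

section
/- Convolution of two even unimodal densities preserves the one-sided inequality about β: if ψ : ℝ → ℝ is nonnegative integrable with ψ(β + Δ) ≤ ψ(β - Δ) for all Δ ≥ 0, and φ : ℝ → ℝ is nonnegative, even, integrable, and nonincreasing on [0, ∞), then (ψ * φ)(β + Δ) ≤ (ψ * φ)(β - Δ) for all Δ ≥ 0. -/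
open MeasureTheory

theorem conv_preserves_onesided (ψ φ : ℝ → ℝ) (β : ℝ)
    (hψpos : ∀ x, 0 ≤ ψ x) (hψi : Integrable ψ)
    (hφpos : ∀ x, 0 ≤ φ x) (hφi : Integrable φ)
    (hφeven : ∀ x, φ (-x) = φ x)
    (hφmono : AntitoneOn φ (Set.Ici (0 : ℝ)))
    (hψ : ∀ Δ : ℝ, 0 ≤ Δ → ψ (β + Δ) ≤ ψ (β - Δ)) :
    ∀ Δ : ℝ, 0 ≤ Δ →
      (∫ y, ψ y * φ (β + Δ - y)) ≤ ∫ y, ψ y * φ (β - Δ - y) := by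
  -- φ x = φ |x|
  have hφabs' : ∀ x : ℝ, φ x = φ |x| := by
    intro x
    rcases abs_cases x with ⟨h, _⟩ | ⟨h, _⟩
    · rw [h]
    · rw [h, hφeven]
  -- monotone comparison via absolute values
  have hφabs : ∀ x y : ℝ, |y| ≤ |x| → φ x ≤ φ y := by
    intro x y h
    rw [hφabs' x, hφabs' y]
    exact hφmono (abs_nonneg y) (abs_nonneg x) h
  -- φ is bounded by φ 0
  have hφbd : ∀ x : ℝ, φ x ≤ φ 0 := by
    intro x
    have := hφabs x 0 (by simp)
    simpa using this
  -- integrability of the convolution integrand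
  have hint : ∀ c : ℝ, Integrable (fun y => ψ y * φ (c - y)) := by
    intro c
    have hm : AEStronglyMeasurable (fun y => φ (c - y)) volume :=
      hφi.1.comp_measurePreserving (Measure.measurePreserving_sub_left volume c)
    refine Integrable.mono' (hψi.mul_const (φ 0)) (hψi.1.mul hm) ?_
    filter_upwards with y
    have h1 : 0 ≤ ψ y * φ (c - y) := mul_nonneg (hψpos y) (hφpos _)
    rw [Real.norm_eq_abs, abs_of_nonneg h1]
    exact mul_le_mul_of_nonneg_left (hφbd _) (hψpos y)
  intro Δ hΔ
  -- reflected versions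
  have refl : ∀ c : ℝ, (∫ y, ψ y * φ (c - y))
      = ∫ y, ψ (2 * β - y) * φ (c - (2 * β - y)) :=
    fun c => (integral_sub_left_eq_self (fun y => ψ y * φ (c - y)) volume (2 * β)).symm
  have hint' : ∀ c : ℝ, Integrable (fun y => ψ (2 * β - y) * φ (c - (2 * β - y))) :=
    fun c => (hint c).comp_sub_left (2 * β)
  -- pointwise rearrangement inequality
  have hpt : ∀ y : ℝ,
      ψ y * φ (β + Δ - y) + ψ (2 * β - y) * φ (β + Δ - (2 * β - y))
        ≤ ψ y * φ (β - Δ - y) + ψ (2 * β - y) * φ (β - Δ - (2 * β - y)) := by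
    intro y
    set t := y - β with ht
    have hy : y = β + t := by ring
    have hy2 : 2 * β - y = β - t := by ring
    have e1 : β + Δ - y = Δ - t := by ring
    have e2 : β + Δ - (2 * β - y) = Δ + t := by ring
    have e3 : β - Δ - y = -(Δ + t) := by ring
    have e4 : β - Δ - (2 * β - y) = -(Δ - t) := by ring
    rw [e1, e2, e3, e4, hy2, hφeven, hφeven, hy]
    -- goal: ψ(β+t)*φ(Δ-t) + ψ(β-t)*φ(Δ+t) ≤ ψ(β+t)*φ(Δ+t) + ψ(β-t)*φ(Δ-t)
    rcases le_or_gt 0 t with h | h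
    · have ha : ψ (β + t) ≤ ψ (β - t) := hψ t h
      have hb : φ (Δ + t) ≤ φ (Δ - t) := by
        apply hφabs
        rw [abs_of_nonneg (by linarith : (0:ℝ) ≤ Δ + t), abs_le]
        constructor <;> linarith
      nlinarith [mul_nonneg (sub_nonneg.2 ha) (sub_nonneg.2 hb)]
    · have h' : 0 ≤ -t := by linarith
      have ha : ψ (β - t) ≤ ψ (β + t) := by
        have := hψ (-t) h'
        simpa [sub_neg_eq_add, ← sub_eq_add_neg] using this
      have hb : φ (Δ - t) ≤ φ (Δ + t) := by
        apply hφabs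
        rw [abs_of_nonneg (by linarith : (0:ℝ) ≤ Δ - t), abs_le]
        constructor <;> linarith
      nlinarith [mul_nonneg (sub_nonneg.2 ha) (sub_nonneg.2 hb)]
  -- combine
  have key : (∫ y, ψ y * φ (β + Δ - y)) + (∫ y, ψ y * φ (β + Δ - y))
      ≤ (∫ y, ψ y * φ (β - Δ - y)) + (∫ y, ψ y * φ (β - Δ - y)) := by
    nth_rewrite 2 [refl (β + Δ)]
    nth_rewrite 2 [refl (β - Δ)]
    rw [← integral_add (hint (β + Δ)) (hint' (β + Δ)),
        ← integral_add (hint (β - Δ)) (hint' (β - Δ))]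
    exact integral_mono ((hint (β + Δ)).add (hint' (β + Δ)))
      ((hint (β - Δ)).add (hint' (β - Δ))) hpt
  linarith
end
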